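/- Let d, n ∈ ℕ, let 𝓖 be a class of Borel probability measures on [0,1]^d × {−1,1}, let M ∈ ℕ with M ≥ 2, and let u, v ∈ (0,∞). Suppose P_0, P_1, …, P_M ∈ 𝓖 satisfy (1/M)·Σ_{j=1}^M KL(P_j ‖ P_0) ≤ u and inf over all measurable f : [0,1]^d → ℝ of (E_{P_i}(f) + E_{P_j}(f)) ≥ v for all distinct i, j ∈ {0,1,…,M}. Then inf_{f̂_n} sup_{P∈𝓖} E_{P^⊗n}[E_P(f̂_n)] ≥ (v/4)·(1 − (2·n·u + √(2·n·u))/log M), where the infimum is over all estimators based on an i.i.d. sample of size n from P. -/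

import Mathlib

open MeasureTheory ENNReal Set

noncomputable section

namespace ZZS

/-! ## Basic geometry -/

/-- The closed unit cube `[0,1]^m`. -/
def cube (m : ℕ) : Set (Fin m → ℝ) := Set.univ.pi fun _ => Set.Icc (0 : ℝ) 1

/-- The open unit cube `(0,1)^m`. -/
def cubeo (m : ℕ) : Set (Fin m → ℝ) := Set.univ.pi fun _ => Set.Ioo (0 : ℝ) 1

/-- The label set `{-1, 1} ⊆ ℝ`. -/
def labels : Set ℝ := {-1, 1}

/-- Euclidean distance on `Fin m → ℝ`. -/
def e2 {m : ℕ} (x z : Fin m → ℝ) : ℝ := Real.sqrt (∑ i, (x i - z i) ^ 2)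

/-! ## Multi-index partial derivatives and Hölder balls -/

/-- Iterated partial derivative along a list of coordinate directions. -/
def pderivList {m : ℕ} : List (Fin m) → ((Fin m → ℝ) → ℝ) → (Fin m → ℝ) → ℝ
  | [], f => f
  | i :: l, f => pderivList l fun x => fderiv ℝ f x (Pi.single i 1)

/-- The canonical list of directions attached to a multi-index. -/
def idxList {m : ℕ} (u : Fin m → ℕ) : List (Fin m) :=
  (List.finRange m).flatMap fun i => List.replicate (u i) i

/-- The partial derivative `D^u f` for a multi-index `u`. -/
def Dm {m : ℕ} (u : Fin m → ℕ) (f : (Fin m → ℝ) → ℝ) : (Fin m → ℝ) → ℝ :=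
  pderivList (idxList u) f

/-- The order `‖u‖₁` of a multi-index `u`. -/
def mord {m : ℕ} (u : Fin m → ℕ) : ℕ := ∑ i, u i

/-- The Hölder-`β` norm of `f`, suprema taken over the set `S` (value in `ℝ≥0∞`). -/
def holderNormOn (m : ℕ) (β : ℝ) (S : Set (Fin m → ℝ)) (f : (Fin m → ℝ) → ℝ) : ℝ≥0∞ :=
  (⨆ (u : Fin m → ℕ) (_ : (mord u : ℝ) < β) (x ∈ S), ENNReal.ofReal |Dm u f x|) +
    ⨆ (u : Fin m → ℕ) (_ : (⌈β⌉ : ℝ) - 1 ≤ (mord u : ℝ) ∧ (mord u : ℝ) < β)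
      (x ∈ S) (z ∈ S) (_ : x ≠ z),
      ENNReal.ofReal |Dm u f x - Dm u f z| /
        ENNReal.ofReal (e2 x z) ^ (β + 1 - (⌈β⌉ : ℝ))

/-- `⌈β - 1⌉`, the number of derivatives required for Hölder-`β` smoothness. -/
def smoothOrder (β : ℝ) : ℕ := ⌈β - 1⌉₊

/-- The Hölder ball `B^β_r([0,1]^m)`:  `⌈β-1⌉`-times continuously differentiable functions on
the interior of the cube (with uniformly continuous derivatives, so that they extend
continuously), with Hölder-`β` norm at most `r`. -/
def HolderBall (m : ℕ) (β r : ℝ) : Set ((Fin m → ℝ) → ℝ) :=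
  {f | ContinuousOn f (cube m) ∧
    ContDiffOn ℝ (smoothOrder β : ℕ∞) f (cubeo m) ∧
    (∀ u : Fin m → ℕ, (mord u : ℝ) < β → UniformContinuousOn (Dm u f) (cubeo m)) ∧
    holderNormOn m β (cubeo m) f ≤ ENNReal.ofReal r}

/-! ## Compositional function classes -/

/-- `G^H_m(dstar, β, r)`: Hölder-`β` functions of `dstar` of the `m` coordinates. -/
def GH (m dstar : ℕ) (β r : ℝ) : Set ((Fin m → ℝ) → ℝ) :=
  {f | ∃ (e : Fin dstar → Fin m) (g : (Fin dstar → ℝ) → ℝ),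
    StrictMono e ∧ g ∈ HolderBall dstar β r ∧ ∀ x ∈ cube m, f x = g fun j => x (e j)}

/-- `G^M_m(dmax)`: maxima of at most `dmax` coordinates. -/
def GM (m dmax : ℕ) : Set ((Fin m → ℝ) → ℝ) :=
  {f | ∃ (I : Finset (Fin m)) (hI : I.Nonempty), I.card ≤ dmax ∧
    ∀ x ∈ cube m, f x = I.sup' hI fun i => x i}

/-- The compositional class `G^CHOM_d(q, K, dmax, dstar, β, r)`. -/
def GCHOM (K dmax dstar : ℕ) (β r : ℝ) : ℕ → (d : ℕ) → Set ((Fin d → ℝ) → ℝ)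
  | 0, d => {f | ∃ h ∈ GH d dstar β r ∪ GM d dmax, ∀ x ∈ cube d, f x = h x}
  | q + 1, d =>
    {f | ∃ (H : (Fin d → ℝ) → Fin K → ℝ) (g : (Fin K → ℝ) → ℝ),
      (∀ j, (fun x => H x j) ∈ GH d dstar β r ∪ GM d dmax) ∧
      (∀ x ∈ cube d, H x ∈ cube K) ∧
      g ∈ GCHOM K dmax dstar β r q K ∧ ∀ x ∈ cube d, f x = g (H x)}

/-- The compositional class `G^CH_d(q, K, dstar, β, r)` (no max-value components). -/
def GCH (K dstar : ℕ) (β r : ℝ) : ℕ → (d : ℕ) → Set ((Fin d → ℝ) → ℝ)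
  | 0, d => {f | ∃ h ∈ GH d dstar β r, ∀ x ∈ cube d, f x = h x}
  | q + 1, d =>
    {f | ∃ (H : (Fin d → ℝ) → Fin K → ℝ) (g : (Fin K → ℝ) → ℝ),
      (∀ j, (fun x => H x j) ∈ GH d dstar β r) ∧
      (∀ x ∈ cube d, H x ∈ cube K) ∧
      g ∈ GCH K dstar β r q K ∧ ∀ x ∈ cube d, f x = g (H x)}

/-! ## Losses, risks, and data distributions -/

/-- The sign function (`sgn 0 = 1`). -/
def sgn (t : ℝ) : ℝ := if 0 ≤ t then 1 else -1

/-- The hinge loss. -/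
def hinge (t : ℝ) : ℝ := max 0 (1 - t)

/-- The truncation operator `T_F`. -/
def trunc (F t : ℝ) : ℝ := min F (max (-F) t)

/-- The joint distribution `P_{η,Q}` on `[0,1]^d × {-1,1}` with input marginal `Q` and
conditional class probability function `η`. -/
def jointMeasure {d : ℕ} (η : (Fin d → ℝ) → ℝ) (Q : Measure (Fin d → ℝ)) :
    Measure ((Fin d → ℝ) × ℝ) :=
  Q.bind fun x =>
    ENNReal.ofReal (η x) • Measure.dirac (x, (1 : ℝ)) +
      ENNReal.ofReal (1 - η x) • Measure.dirac (x, (-1 : ℝ))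

/-- The 0-1 risk (misclassification error). -/
def risk01 {d : ℕ} (P : Measure ((Fin d → ℝ) × ℝ)) (f : (Fin d → ℝ) → ℝ) : ℝ :=
  (P {p | sgn (f p.1) ≠ p.2}).toReal

/-- The infimum of the 0-1 risk over all measurable functions. -/
def bayes01 {d : ℕ} (P : Measure ((Fin d → ℝ) × ℝ)) : ℝ :=
  ⨅ g : {g : (Fin d → ℝ) → ℝ // Measurable g}, risk01 P g.1

/-- The excess 0-1 risk. -/
def excess01 {d : ℕ} (P : Measure ((Fin d → ℝ) × ℝ)) (f : (Fin d → ℝ) → ℝ) : ℝ :=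
  risk01 P f - bayes01 P

/-- The `φ`-risk. -/
def riskPhi {d : ℕ} (φ : ℝ → ℝ) (P : Measure ((Fin d → ℝ) × ℝ)) (f : (Fin d → ℝ) → ℝ) : ℝ :=
  ∫ p, φ (p.2 * f p.1) ∂P

/-- The infimum of the `φ`-risk over all measurable functions. -/
def bayesPhi {d : ℕ} (φ : ℝ → ℝ) (P : Measure ((Fin d → ℝ) × ℝ)) : ℝ :=
  ⨅ g : {g : (Fin d → ℝ) → ℝ // Measurable g}, riskPhi φ P g.1

/-- The excess `φ`-risk. -/
def excessPhi {d : ℕ} (φ : ℝ → ℝ) (P : Measure ((Fin d → ℝ) × ℝ)) (f : (Fin d → ℝ) → ℝ) : ℝ :=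
  riskPhi φ P f - bayesPhi φ P

/-- A Borel probability measure on `[0,1]^d × {-1,1}`, presented by its input marginal `Q`
(a Borel probability measure concentrated on the cube) and its conditional class
probability function `η` (measurable, `[0,1]`-valued);  the measure itself is
`jointMeasure η Q`. -/
structure DataDist (d : ℕ) where
  η : (Fin d → ℝ) → ℝ
  Q : Measure (Fin d → ℝ)
  η_meas : Measurable η
  η_mem : ∀ x, η x ∈ Set.Icc (0 : ℝ) 1
  Q_prob : IsProbabilityMeasure Q
  Q_cube : Q (cube d) = 1

/-- The measure on `[0,1]^d × {-1,1}` associated with a `DataDist`. -/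
def DataDist.P {d : ℕ} (D : DataDist d) : Measure ((Fin d → ℝ) × ℝ) := jointMeasure D.η D.Q

/-- `x ^ s` for `s ∈ [0,∞]`, with the conventions `x ^ ∞ = 0` for `x < 1` and `1 ^ ∞ = 1`. -/
def rpowE (x : ℝ≥0∞) (s : ℝ≥0∞) : ℝ≥0∞ :=
  if s = ∞ then (if x < 1 then 0 else if x = 1 then 1 else ∞) else x ^ s.toReal

/-- The Tsybakov noise class `T^{d,s}_{α,τ}` (noise exponent `s ∈ [0,∞]`,
threshold `τ ∈ (0,∞]`). -/
def Tsybakov (d : ℕ) (s : ℝ≥0∞) (α : ℝ) (τ : ℝ≥0∞) : Set (DataDist d) :=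
  {P | ∀ t : ℝ, 0 < t → ENNReal.ofReal t ≤ τ →
    P.Q ({x | |2 * P.η x - 1| ≤ t} ∩ cube d) ≤ ENNReal.ofReal α * rpowE (ENNReal.ofReal t) s}

/-- The class `H^{d,β,r}_{q,K,dstar,dmax}`: distributions whose conditional class probability
agrees a.s. with a member of `G^CHOM`. -/
def HCHOM (d q K dstar dmax : ℕ) (β r : ℝ) : Set (DataDist d) :=
  {P | ∃ f ∈ GCHOM K dmax dstar β r q d, ∀ᵐ x ∂P.Q, P.η x = f x}

/-- `M_{Λ,d}`: Borel probability measures on `[0,1]^d` with a `[0,Λ]`-valued density with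
respect to Lebesgue measure. -/
def MLam (d : ℕ) (Λ : ℝ) : Set (Measure (Fin d → ℝ)) :=
  {Q | ∃ g : (Fin d → ℝ) → ℝ, Measurable g ∧ (∀ x, g x ∈ Set.Icc 0 Λ) ∧
    Q = (volume.restrict (cube d)).withDensity fun x => ENNReal.ofReal (g x)}

/-- The class `H^{d,β,r,Λ}_{q,K,dstar}`: joint laws `P_{η,Q}` with `η ∈ G^CH` (valued in
`[0,1]`) and `Q ∈ M_{Λ,d}`. -/
def HCHL (d q K dstar : ℕ) (β r Λ : ℝ) : Set (DataDist d) :=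
  {P | (∃ f ∈ GCH K dstar β r q d, (∀ x ∈ cube d, f x ∈ Set.Icc (0 : ℝ) 1) ∧
      ∀ᵐ x ∂P.Q, P.η x = f x) ∧ P.Q ∈ MLam d Λ}

/-- The class `H^{d,β,r}_{q,K,dstar}`: joint laws `P_{η,Q}` with `η ∈ G^CH` (valued in
`[0,1]`) and `Q` an arbitrary Borel probability measure on the cube. -/
def HCH (d q K dstar : ℕ) (β r : ℝ) : Set (DataDist d) :=
  {P | ∃ f ∈ GCH K dstar β r q d, (∀ x ∈ cube d, f x ∈ Set.Icc (0 : ℝ) 1) ∧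
    ∀ᵐ x ∂P.Q, P.η x = f x}

/-! ## Samples and estimators -/

/-- The law of an i.i.d. sample of size `n` from `μ`. -/
def iid {α : Type*} [MeasurableSpace α] (μ : Measure α) : (n : ℕ) → Measure (Fin n → α)
  | 0 => Measure.dirac fun i => i.elim0
  | n + 1 => (iid μ n).bind fun p => μ.map fun a => Fin.snoc p a

/-- An estimator: a rule assigning to each sample of size `n` a function `[0,1]^d → ℝ`. -/
def Estimator (d n : ℕ) := (Fin n → (Fin d → ℝ) × ℝ) → (Fin d → ℝ) → ℝ

/-- (Joint) measurability of an estimator. -/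
def Estimator.Meas {d n : ℕ} (A : Estimator d n) : Prop :=
  Measurable fun p : (Fin n → (Fin d → ℝ) × ℝ) × (Fin d → ℝ) => A p.1 p.2

/-- The expected excess 0-1 risk `E_{P^{⊗n}}[E_P(f̂_n)]` of an estimator. -/
def expectedExcess01 {d : ℕ} (P : Measure ((Fin d → ℝ) × ℝ)) {n : ℕ} (A : Estimator d n) : ℝ :=
  ∫ ω, excess01 P (A ω) ∂iid P n

/-- The covering number `N(F, γ)` (uniform norm over `Ω`), valued in `ℝ≥0∞`. -/
def coveringNumber {X : Type*} (Ω : Set X) (F : Set (X → ℝ)) (γ : ℝ) : ℝ≥0∞ :=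
  ⨅ (A : Finset (X → ℝ))
    (_ : ↑A ⊆ F ∧ ∀ f ∈ F, ∃ g ∈ A, ∀ x ∈ Ω, |f x - g x| ≤ γ),
    (A.card : ℝ≥0∞)

/-- `f` is an empirical `φ`-risk minimizer over `F` for the sample `ω`. -/
def IsERM {d n : ℕ} (φ : ℝ → ℝ) (F : Set ((Fin d → ℝ) → ℝ))
    (ω : Fin n → (Fin d → ℝ) × ℝ) (f : (Fin d → ℝ) → ℝ) : Prop :=
  f ∈ F ∧ ∀ g ∈ F,
    (n : ℝ)⁻¹ * ∑ i, φ ((ω i).2 * f ((ω i).1)) ≤ (n : ℝ)⁻¹ * ∑ i, φ ((ω i).2 * g ((ω i).1))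

/-! ## ReLU neural networks -/

/-- A feedforward ReLU network with input dimension `d`. -/
structure ReLUNet (d : ℕ) where
  L : ℕ
  width : ℕ → ℕ
  W : (i : ℕ) → Fin (width (i + 1)) → Fin (width i) → ℝ
  v : (i : ℕ) → Fin (width i) → ℝ
  h0 : width 0 = d
  hL : width (L + 1) = 1

/-- The `i`-th intermediate layer output `W_i σ_{v_i} ⋯ W_1 σ_{v_1} W_0 x`. -/
def ReLUNet.layer {d : ℕ} (net : ReLUNet d) (x : Fin (net.width 0) → ℝ) :
    (i : ℕ) → Fin (net.width (i + 1)) → ℝ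
  | 0 => fun j => ∑ k, net.W 0 j k * x k
  | i + 1 => fun j => ∑ k, net.W (i + 1) j k * max 0 (net.layer x i k - net.v (i + 1) k)

/-- The real-valued function computed by a ReLU network. -/
def ReLUNet.eval {d : ℕ} (net : ReLUNet d) (x : Fin d → ℝ) : ℝ :=
  net.layer (fun j => x (Fin.cast net.h0 j)) net.L (Fin.cast net.hL.symm 0)

/-- The class `F^NN_d(G, N, S, B, Fb)` of ReLU networks with depth `≤ G`, widths `≤ N`,
at most `S` nonzero parameters, parameter magnitudes `≤ B`, and uniform norm on the cube
`≤ Fb`. -/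
def FNN (d : ℕ) (G N : ℝ) (S : ℝ≥0∞) (B : ℝ) (Fb : ℝ≥0∞) : Set ((Fin d → ℝ) → ℝ) :=
  {f | ∃ net : ReLUNet d,
    (∀ x, f x = net.eval x) ∧
    (net.L : ℝ) ≤ G ∧
    (∀ i ≤ net.L + 1, (net.width i : ℝ) ≤ N) ∧
    ((∑ i ∈ Finset.range (net.L + 1),
        (Nat.card {p : Fin (net.width (i + 1)) × Fin (net.width i) // net.W i p.1 p.2 ≠ 0}
          : ℝ≥0∞)) +
      ∑ i ∈ Finset.range net.L,
        (Nat.card {j : Fin (net.width (i + 1)) // net.v (i + 1) j ≠ 0} : ℝ≥0∞)) ≤ S ∧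
    (∀ i ≤ net.L, ∀ j k, |net.W i j k| ≤ B) ∧
    (∀ i, 1 ≤ i → i ≤ net.L → ∀ j, |net.v i j| ≤ B) ∧
    ∀ x ∈ cube d, ENNReal.ofReal |f x| ≤ Fb}

/-! ## Kullback–Leibler divergence -/

open Classical in
/-- The Kullback–Leibler divergence. -/
def KL {X : Type*} [MeasurableSpace X] (P Q : Measure X) : ℝ≥0∞ :=
  if P ≪ Q ∧ Integrable (fun x => Real.log (P.rnDeriv Q x).toReal) P then
    ENNReal.ofReal (∫ x, Real.log (P.rnDeriv Q x).toReal ∂P)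
  else ∞

/-- The exponent `e / (dstar/(s+1) + (1 + 1/(s+1))·e)` of the minimax rate, for noise
exponent `s ∈ [0,∞]` (equal to `1` when `s = ∞`). -/
def rateExp (dstar : ℕ) (e : ℝ) (s : ℝ≥0∞) : ℝ :=
  if s = ∞ then 1
  else e / ((dstar : ℝ) / (s.toReal + 1) + (1 + 1 / (s.toReal + 1)) * e)

/-! ## Auxiliary infrastructure for the proof of Statement 17 -/

section IIDAux

variable {α : Type*} [MeasurableSpace α]

lemma measurable_snocFun {n : ℕ} :
    Measurable (fun q : (Fin n → α) × α => (Fin.snoc q.1 q.2 : Fin (n + 1) → α)) := by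
  refine measurable_pi_lambda _ (fun i => ?_)
  refine Fin.lastCases ?_ (fun j => ?_) i
  · simpa only [Fin.snoc_last] using measurable_snd
  · simp only [Fin.snoc_castSucc]
    exact (measurable_pi_apply j).comp measurable_fst

lemma measurable_snocLeft {n : ℕ} (p : Fin n → α) :
    Measurable (fun x : α => (Fin.snoc p x : Fin (n + 1) → α)) :=
  measurable_snocFun.comp measurable_prodMk_left

lemma measurable_snocKernel {n : ℕ} (μ : Measure α) [SFinite μ] :
    Measurable (fun p : Fin n → α => μ.map (fun x => (Fin.snoc p x : Fin (n + 1) → α))) := by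
  apply Measure.measurable_of_measurable_coe
  intro s hs
  have h1 : ∀ p : Fin n → α, μ.map (fun x => (Fin.snoc p x : Fin (n + 1) → α)) s
      = μ (Prod.mk p ⁻¹'
        ((fun q : (Fin n → α) × α => (Fin.snoc q.1 q.2 : Fin (n + 1) → α)) ⁻¹' s)) := by
    intro p
    rw [Measure.map_apply (measurable_snocLeft p) hs]
    rfl
  simp_rw [h1]
  exact measurable_measure_prodMk_left (measurable_snocFun hs)

lemma iid_succ (μ : Measure α) (n : ℕ) :
    iid μ (n + 1) = (iid μ n).bind (fun p => μ.map (fun x => (Fin.snoc p x : Fin (n+1) → α))) :=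
  rfl

lemma isProbabilityMeasure_iid (μ : Measure α) [IsProbabilityMeasure μ] :
    ∀ n, IsProbabilityMeasure (iid μ n)
  | 0 => by unfold iid; infer_instance
  | n + 1 => by
    have := isProbabilityMeasure_iid μ n
    constructor
    rw [iid_succ, Measure.bind_apply MeasurableSet.univ (measurable_snocKernel μ).aemeasurable]
    have h : ∀ p : Fin n → α,
        μ.map (fun x => (Fin.snoc p x : Fin (n+1) → α)) Set.univ = 1 := by
      intro p
      rw [Measure.map_apply (measurable_snocLeft p) MeasurableSet.univ]
      simp
    simp [h]

lemma lintegral_iid_succ (μ : Measure α) [SFinite μ] (n : ℕ) {f : (Fin (n+1) → α) → ℝ≥0∞}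
    (hf : Measurable f) :
    ∫⁻ ω, f ω ∂iid μ (n+1) = ∫⁻ p, ∫⁻ x, f (Fin.snoc p x) ∂μ ∂iid μ n := by
  rw [iid_succ, Measure.lintegral_bind (measurable_snocKernel μ).aemeasurable hf.aemeasurable]
  refine lintegral_congr fun p => ?_
  rw [lintegral_map hf (measurable_snocLeft p)]

lemma iid_map_eval (μ : Measure α) [IsProbabilityMeasure μ] :
    ∀ (n : ℕ) (i : Fin n), (iid μ n).map (fun ω => ω i) = μ
  | 0, i => i.elim0
  | n + 1, i => by
    have := isProbabilityMeasure_iid μ n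
    ext s hs
    rw [Measure.map_apply (measurable_pi_apply i) hs]
    have hbind : (iid μ (n+1)) ((fun ω : Fin (n+1) → α => ω i) ⁻¹' s)
        = ∫⁻ p, (μ.map (fun x => (Fin.snoc p x : Fin (n+1) → α)))
            ((fun ω : Fin (n+1) → α => ω i) ⁻¹' s) ∂iid μ n := by
      rw [iid_succ, Measure.bind_apply (measurable_pi_apply i hs) (measurable_snocKernel μ).aemeasurable]
    rw [hbind]
    have hmap : ∀ p : Fin n → α,
        (μ.map (fun x => (Fin.snoc p x : Fin (n+1) → α)))
          ((fun ω : Fin (n+1) → α => ω i) ⁻¹' s)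
        = μ {x : α | (Fin.snoc p x : Fin (n+1) → α) i ∈ s} := by
      intro p
      rw [Measure.map_apply (measurable_snocLeft p) (measurable_pi_apply i hs)]
      rfl
    simp_rw [hmap]
    induction i using Fin.lastCases with
    | last =>
      simp only [Fin.snoc_last]
      simp [measure_univ]
    | cast j =>
      simp only [Fin.snoc_castSucc]
      have hms : MeasurableSet {p : Fin n → α | p j ∈ s} := measurable_pi_apply j hs
      have hind : ∀ p : Fin n → α, μ {x : α | p j ∈ s}
          = Set.indicator {p : Fin n → α | p j ∈ s} (fun _ => 1) p := by
        intro p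
        by_cases hp : p j ∈ s
        · simp [Set.indicator_of_mem, hp, Set.setOf_true, measure_univ]
        · simp [Set.indicator_of_notMem, hp, Set.setOf_false]
      simp_rw [hind]
      rw [lintegral_indicator hms, setLIntegral_one]
      have hmj := iid_map_eval μ n j
      conv_rhs => rw [← hmj]
      rw [Measure.map_apply (measurable_pi_apply j) hs]
      rfl

lemma lintegral_iid_withDensity (μ : Measure α) [IsProbabilityMeasure μ] {ρ : α → ℝ≥0∞}
    (hρ : Measurable ρ) :
    ∀ (n : ℕ) {f : (Fin n → α) → ℝ≥0∞}, Measurable f →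
      ∫⁻ ω, f ω ∂iid (μ.withDensity ρ) n = ∫⁻ ω, (∏ i, ρ (ω i)) * f ω ∂iid μ n
  | 0, f, hf => by
    have hprod : Measurable fun ω : Fin 0 → α => (∏ i, ρ (ω i)) * f ω := by
      exact (Finset.measurable_prod Finset.univ
        (fun i _ => hρ.comp (measurable_pi_apply i))).mul hf
    unfold iid
    rw [lintegral_dirac' _ hf, lintegral_dirac' _ hprod]
    simp
  | n + 1, f, hf => by
    have hprod : Measurable fun ω : Fin (n+1) → α => (∏ i, ρ (ω i)) * f ω := by
      exact (Finset.measurable_prod Finset.univ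
        (fun i _ => hρ.comp (measurable_pi_apply i))).mul hf
    have hsnoc : ∀ p : Fin n → α, Measurable fun x : α => f (Fin.snoc p x) :=
      fun p => hf.comp (measurable_snocLeft p)
    have hmul : ∀ p : Fin n → α, Measurable fun x : α => ρ x * f (Fin.snoc p x) :=
      fun p => hρ.mul (hsnoc p)
    have hinner : Measurable fun p : Fin n → α => ∫⁻ x, ρ x * f (Fin.snoc p x) ∂μ := by
      apply Measurable.lintegral_prod_right'
        (f := fun q : (Fin n → α) × α => ρ q.2 * f (Fin.snoc q.1 q.2))
      exact (hρ.comp measurable_snd).mul (hf.comp measurable_snocFun)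
    rw [lintegral_iid_succ (μ.withDensity ρ) n hf, lintegral_iid_succ μ n hprod]
    have h1 : ∀ p : Fin n → α, ∫⁻ x, f (Fin.snoc p x) ∂(μ.withDensity ρ)
        = ∫⁻ x, ρ x * f (Fin.snoc p x) ∂μ := fun p =>
      lintegral_withDensity_eq_lintegral_mul μ hρ (hsnoc p)
    simp_rw [h1]
    rw [lintegral_iid_withDensity μ hρ n hinner]
    refine lintegral_congr fun p => ?_
    rw [← lintegral_const_mul _ (hmul p)]
    refine lintegral_congr fun x => ?_
    rw [Fin.prod_univ_castSucc]
    simp only [Fin.snoc_castSucc, Fin.snoc_last]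
    ring

lemma iid_withDensity (μ : Measure α) [IsProbabilityMeasure μ] {ρ : α → ℝ≥0∞}
    (hρ : Measurable ρ) (n : ℕ) :
    iid (μ.withDensity ρ) n = (iid μ n).withDensity (fun ω => ∏ i, ρ (ω i)) := by
  ext s hs
  calc iid (μ.withDensity ρ) n s
      = ∫⁻ ω, s.indicator (fun _ => 1) ω ∂iid (μ.withDensity ρ) n :=
        (lintegral_indicator_one hs).symm
    _ = ∫⁻ ω, (∏ i, ρ (ω i)) * s.indicator (fun _ => 1) ω ∂iid μ n :=
        lintegral_iid_withDensity μ hρ n (measurable_one.indicator hs)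
    _ = ∫⁻ ω in s, (∏ i, ρ (ω i)) ∂iid μ n := by
        rw [← lintegral_indicator hs]
        refine lintegral_congr fun ω => ?_
        by_cases hω : ω ∈ s <;> simp [hω]
    _ = ((iid μ n).withDensity fun ω => ∏ i, ρ (ω i)) s := (withDensity_apply _ hs).symm

lemma integral_iid_eval (μ : Measure α) [IsProbabilityMeasure μ] {n : ℕ} (i : Fin n)
    {g : α → ℝ} (hg : AEStronglyMeasurable g μ) :
    ∫ ω, g (ω i) ∂iid μ n = ∫ x, g x ∂μ := by
  have := isProbabilityMeasure_iid μ n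
  have hmap := iid_map_eval μ n i
  conv_rhs => rw [← hmap]
  rw [integral_map (measurable_pi_apply i).aemeasurable (by rwa [hmap])]

lemma integrable_iid_eval (μ : Measure α) [IsProbabilityMeasure μ] {n : ℕ} (i : Fin n)
    {g : α → ℝ} (hg : Integrable g μ) :
    Integrable (fun ω => g (ω i)) (iid μ n) := by
  have := isProbabilityMeasure_iid μ n
  have hmap := iid_map_eval μ n i
  have hg' : Integrable g ((iid μ n).map (fun ω => ω i)) := by rwa [hmap]
  exact (integrable_map_measure
    (by rw [hmap]; exact hg.aestronglyMeasurable :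
      AEStronglyMeasurable g ((iid μ n).map fun ω => ω i))
    (measurable_pi_apply i).aemeasurable).mp hg'

end IIDAux

section COMAux

variable {α : Type*} [MeasurableSpace α]

lemma aux_ae_iid_eval (μ : Measure α) [IsProbabilityMeasure μ] {n : ℕ} (i : Fin n)
    {p : α → Prop} (hp : MeasurableSet {x | p x}) (h : ∀ᵐ x ∂μ, p x) :
    ∀ᵐ ω ∂iid μ n, p (ω i) := by
  rw [ae_iff] at h ⊢
  have heq : {ω : Fin n → α | ¬ p (ω i)} = (fun ω : Fin n → α => ω i) ⁻¹' {x | p x}ᶜ := rfl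
  rw [heq, ← Measure.map_apply (measurable_pi_apply i) hp.compl, iid_map_eval μ n i]
  exact h

lemma aux_integral_withDensity {μ : Measure α} {R : α → ℝ≥0∞}
    (hR : Measurable R) (hfin : ∀ᵐ x ∂μ, R x < ∞) (f : α → ℝ) :
    ∫ x, f x ∂(μ.withDensity R) = ∫ x, f x * (R x).toReal ∂μ := by
  rw [← withDensity_congr_ae (coe_toNNReal_ae_eq hfin),
    integral_withDensity_eq_integral_smul hR.ennreal_toNNReal]
  refine integral_congr_ae (ae_of_all _ fun x => ?_)
  simp [NNReal.smul_def, ENNReal.toReal, mul_comm]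

lemma aux_xlogx {x : ℝ} (hx : 0 ≤ x) : 2 * x - 2 * Real.sqrt x ≤ x * Real.log x := by
  rcases eq_or_lt_of_le hx with h | h
  · simp [← h]
  · have hs : 0 < Real.sqrt x := Real.sqrt_pos.2 h
    have h1 : Real.log (1 / Real.sqrt x) ≤ 1 / Real.sqrt x - 1 :=
      Real.log_le_sub_one_of_pos (by positivity)
    rw [Real.log_div one_ne_zero (ne_of_gt hs), Real.log_one] at h1
    have h2 : 1 - 1 / Real.sqrt x ≤ Real.log (Real.sqrt x) := by linarith
    have h3 : Real.log (Real.sqrt x) = Real.log x / 2 := Real.log_sqrt hx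
    have h4 : x / Real.sqrt x = Real.sqrt x := Real.div_sqrt
    have h5 : (2 * x) * (1 / Real.sqrt x) = 2 * Real.sqrt x := by
      rw [mul_one_div, mul_div_assoc, h4]
    have h6 : (2 * x) * (1 - 1 / Real.sqrt x) ≤ (2 * x) * Real.log (Real.sqrt x) :=
      mul_le_mul_of_nonneg_left h2 (by positivity)
    have h7 : (2 * x) * Real.log (Real.sqrt x) = x * Real.log x := by rw [h3]; ring
    nlinarith [h6]

lemma aux_pospart_bound {x : ℝ} (hx : 0 < x) :
    max (-(Real.log x)) 0 * x ≤ max (1 - x) 0 := by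
  rcases le_or_gt 1 x with h | h
  · have : max (-(Real.log x)) 0 = 0 := max_eq_right (by simpa using Real.log_nonneg h)
    rw [this, zero_mul]
    exact le_max_right _ _
  · have hlog : Real.log (1 / x) ≤ 1 / x - 1 := Real.log_le_sub_one_of_pos (by positivity)
    rw [Real.log_div one_ne_zero (ne_of_gt hx), Real.log_one] at hlog
    have h1 : -(Real.log x) * x ≤ (1 / x - 1) * x := by
      have : 0 - Real.log x ≤ 1 / x - 1 := hlog
      nlinarith
    have h2 : (1 / x - 1) * x = 1 - x := by field_simp
    calc max (-(Real.log x)) 0 * x = max (-(Real.log x) * x) 0 := by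
          rw [max_mul_of_nonneg _ _ hx.le, zero_mul]
      _ ≤ max (1 - x) 0 := max_le_max (by linarith) le_rfl

set_option maxHeartbeats 1000000 in
lemma iid_changeOfMeasure (μ ν : Measure α) [IsProbabilityMeasure μ] [IsProbabilityMeasure ν]
    (hac : ν ≪ μ)
    (hint : Integrable (fun x => Real.log ((ν.rnDeriv μ x).toReal)) ν)
    (n : ℕ) (hn : 0 < n) {S : Set (Fin n → α)} (hS : MeasurableSet S) {t : ℝ} (ht : 0 < t) :
    0 ≤ ∫ x, Real.log ((ν.rnDeriv μ x).toReal) ∂ν ∧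
    ((iid ν n) S).toReal ≤
      ((n : ℝ) * (∫ x, Real.log ((ν.rnDeriv μ x).toReal) ∂ν)
        + Real.sqrt ((n : ℝ) * ∫ x, Real.log ((ν.rnDeriv μ x).toReal) ∂ν)) / t
      + Real.exp t * ((iid μ n) S).toReal := by
  have hQP : IsProbabilityMeasure (iid μ n) := isProbabilityMeasure_iid μ n
  have hQnP : IsProbabilityMeasure (iid ν n) := isProbabilityMeasure_iid ν n
  set r : α → ℝ≥0∞ := ν.rnDeriv μ with hr_def
  have hr : Measurable r := Measure.measurable_rnDeriv ν μ
  have hν_eq : μ.withDensity r = ν := Measure.withDensity_rnDeriv_eq ν μ hac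
  set c : ℝ := ∫ x, Real.log ((r x).toReal) ∂ν with hc_def
  set Q := iid μ n with hQ_def
  set Qn := iid ν n with hQn_def
  set R : (Fin n → α) → ℝ≥0∞ := fun ω => ∏ i, r (ω i) with hR_def
  have hRmeas : Measurable R :=
    Finset.measurable_prod _ fun i _ => hr.comp (measurable_pi_apply i)
  have hQn_eq : Qn = Q.withDensity R := by
    rw [hQn_def, ← hν_eq]
    exact iid_withDensity μ hr n
  -- a.e. finiteness of all coordinates under Q
  have hrfin : ∀ᵐ x ∂μ, r x < ∞ := Measure.rnDeriv_lt_top ν μ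
  have hRfin : ∀ᵐ ω ∂Q, ∀ i, r (ω i) < ∞ := by
    rw [ae_all_iff]
    intro i
    exact aux_ae_iid_eval μ i (measurableSet_lt hr measurable_const) hrfin
  have hRfin' : ∀ᵐ ω ∂Q, R ω < ∞ :=
    hRfin.mono fun ω h => ENNReal.prod_lt_top fun i _ => h i
  -- the log-likelihood-ratio sum
  set L : (Fin n → α) → ℝ := fun ω => ∑ i, Real.log ((r (ω i)).toReal) with hL_def
  have hLmeas : Measurable L :=
    Finset.measurable_sum _ fun i _ =>
      Real.measurable_log.comp ((hr.comp (measurable_pi_apply i)).ennreal_toReal)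
  have hLint : Integrable L Qn :=
    integrable_finset_sum _ fun i _ => integrable_iid_eval ν i hint
  have hLint_eq : ∫ ω, L ω ∂Qn = (n : ℝ) * c := by
    rw [hL_def, integral_finset_sum _ (fun i _ => integrable_iid_eval ν i hint)]
    have : ∀ i : Fin n, ∫ ω, Real.log ((r (ω i)).toReal) ∂Qn = c := fun i =>
      integral_iid_eval ν i hint.aestronglyMeasurable
    rw [Finset.sum_congr rfl (fun i _ => this i), Finset.sum_const, Finset.card_univ,
      Fintype.card_fin, nsmul_eq_mul]
  -- master pointwise description
  have hmain : ∀ᵐ ω ∂Q, ((∀ i, r (ω i) ≠ 0) → (R ω).toReal = Real.exp (L ω)) ∧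
      ((¬ ∀ i, r (ω i) ≠ 0) → (R ω).toReal = 0) ∧ R ω ≠ ∞ := by
    refine hRfin.mono fun ω hfin => ?_
    have hne : R ω ≠ ∞ := (ENNReal.prod_lt_top fun i _ => hfin i).ne
    have htr : (R ω).toReal = ∏ i, (r (ω i)).toReal := ENNReal.toReal_prod _ _
    refine ⟨fun h0 => ?_, fun h0 => ?_, hne⟩
    · rw [htr, hL_def, Real.exp_sum]
      refine Finset.prod_congr rfl fun i _ => ?_
      rw [Real.exp_log (ENNReal.toReal_pos (h0 i) (hfin i).ne)]
    · push_neg at h0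
      obtain ⟨i, hi⟩ := h0
      rw [htr]
      exact Finset.prod_eq_zero (Finset.mem_univ i) (by simp [hi])
  -- ∫ R = 1
  have hlintR : ∫⁻ ω, R ω ∂Q = 1 := by
    have h1 : (Q.withDensity R) Set.univ = ∫⁻ ω in Set.univ, R ω ∂Q :=
      withDensity_apply _ MeasurableSet.univ
    rw [Measure.restrict_univ] at h1
    rw [← h1, ← hQn_eq]
    exact measure_univ
  have hRint : Integrable (fun ω => (R ω).toReal) Q :=
    integrable_toReal_of_lintegral_ne_top hRmeas.aemeasurable (by rw [hlintR]; exact one_ne_top)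
  have hR1 : ∫ ω, (R ω).toReal ∂Q = 1 := by
    rw [integral_toReal hRmeas.aemeasurable hRfin', hlintR]
    rfl
  -- the square root of R and its integral
  set sq : (Fin n → α) → ℝ := fun ω => Real.sqrt ((R ω).toReal) with hsq_def
  have hsqmeas : Measurable sq := Real.continuous_sqrt.measurable.comp hRmeas.ennreal_toReal
  have hsq_nonneg : ∀ ω, 0 ≤ sq ω := fun ω => Real.sqrt_nonneg _
  have hsq_sq : ∀ ω, sq ω ^ 2 = (R ω).toReal := fun ω => Real.sq_sqrt ENNReal.toReal_nonneg
  have hbound : Integrable (fun ω : Fin n → α => 1 + (R ω).toReal) Q := by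
    exact (integrable_const 1).add hRint
  have hsqint : Integrable sq Q := by
    refine Integrable.mono' hbound hsqmeas.aestronglyMeasurable
      (ae_of_all _ fun ω => ?_)
    rw [Real.norm_eq_abs, abs_of_nonneg (hsq_nonneg ω)]
    nlinarith [hsq_sq ω, hsq_nonneg ω, sq_nonneg (sq ω - 1)]
  set H : ℝ := ∫ ω, sq ω ∂Q with hH_def
  have hH_nonneg : 0 ≤ H := integral_nonneg hsq_nonneg
  have hH_le_one : H ≤ 1 := by
    have hdiv : Integrable (fun ω : Fin n → α => (1 + (R ω).toReal) / 2) Q := by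
      exact hbound.div_const 2
    have hmono : H ≤ ∫ ω, (1 + (R ω).toReal) / 2 ∂Q := by
      refine integral_mono hsqint hdiv (fun ω => ?_)
      nlinarith [hsq_sq ω, sq_nonneg (sq ω - 1)]
    have hval : ∫ ω, (1 + (R ω).toReal) / 2 ∂Q = 1 := by
      rw [integral_div, integral_add (integrable_const 1) hRint, hR1]
      norm_num
    linarith
  -- K
  set K : ℝ := ∫ ω, (R ω).toReal * Real.log ((R ω).toReal) ∂Q with hK_def
  have hE1 : (fun ω => L ω * (R ω).toReal)
      =ᵐ[Q] (fun ω => (R ω).toReal * Real.log ((R ω).toReal)) := by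
    refine hmain.mono fun ω hw => ?_
    obtain ⟨h1, h2, -⟩ := hw
    show L ω * (R ω).toReal = (R ω).toReal * Real.log ((R ω).toReal)
    by_cases h0 : ∀ i, r (ω i) ≠ 0
    · rw [h1 h0, Real.log_exp]
      ring
    · rw [h2 h0]
      simp
  have hLRint : Integrable (fun ω => L ω * (R ω).toReal) Q := by
    have := hLint
    rw [hQn_eq, integrable_withDensity_iff hRmeas hRfin'] at this
    exact this
  have hKRint : Integrable (fun ω => (R ω).toReal * Real.log ((R ω).toReal)) Q :=
    hLRint.congr hE1
  have hKeq : K = (n : ℝ) * c := by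
    rw [hK_def, ← integral_congr_ae hE1, ← aux_integral_withDensity hRmeas hRfin' L,
      ← hQn_eq, hLint_eq]
  -- Hellinger-type bound : 2 - 2 H ≤ K
  have hHK : 2 - 2 * H ≤ K := by
    have hpt : ∀ ω, 2 * (R ω).toReal - 2 * sq ω
        ≤ (R ω).toReal * Real.log ((R ω).toReal) := fun ω =>
      aux_xlogx ENNReal.toReal_nonneg
    have hint2 : Integrable (fun ω => 2 * (R ω).toReal - 2 * sq ω) Q :=
      (hRint.const_mul 2).sub (hsqint.const_mul 2)
    have := integral_mono hint2 hKRint hpt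
    rw [integral_sub (hRint.const_mul 2) (hsqint.const_mul 2), integral_const_mul,
      integral_const_mul, hR1] at this
    linarith
  have hK_nonneg : 0 ≤ K := by linarith
  -- total-variation-type bound
  have hsub_int : Integrable (fun ω => 1 - (R ω).toReal) Q := (integrable_const 1).sub hRint
  have habs_int : Integrable (fun ω => |1 - (R ω).toReal|) Q := hsub_int.abs
  have hTV : ∫ ω, max (1 - (R ω).toReal) 0 ∂Q ≤ Real.sqrt K := by
    have hhalf : ∫ ω, max (1 - (R ω).toReal) 0 ∂Q
        = (∫ ω, |1 - (R ω).toReal| ∂Q) / 2 := by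
      have hptw : ∀ ω, max (1 - (R ω).toReal) 0
          = ((1 - (R ω).toReal) + |1 - (R ω).toReal|) / 2 := by
        intro ω
        rcases le_total (1 - (R ω).toReal) 0 with h | h
        · rw [max_eq_right h, abs_of_nonpos h]; ring
        · rw [max_eq_left h, abs_of_nonneg h]; ring
      simp_rw [hptw]
      rw [integral_div, integral_add hsub_int habs_int, integral_sub (integrable_const 1) hRint,
        hR1]
      simp
    have hCS : ∫ ω, |1 - (R ω).toReal| ∂Q
        ≤ Real.sqrt (2 - 2 * H) * Real.sqrt (2 + 2 * H) := by
      have hpq : Real.HolderConjugate 2 2 := Real.HolderConjugate.two_two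
      have hfsq : Integrable (fun ω => |1 - sq ω| ^ 2) Q := by
        have : (fun ω => |1 - sq ω| ^ 2) = fun ω => 1 - 2 * sq ω + (R ω).toReal := by
          funext ω
          rw [sq_abs]
          nlinarith [hsq_sq ω]
        rw [this]
        exact ((integrable_const 1).sub (hsqint.const_mul 2)).add hRint
      have hgsq : Integrable (fun ω => (1 + sq ω) ^ 2) Q := by
        have : (fun ω => (1 + sq ω) ^ 2) = fun ω => 1 + 2 * sq ω + (R ω).toReal := by
          funext ω
          nlinarith [hsq_sq ω]
        rw [this]
        exact ((integrable_const 1).add (hsqint.const_mul 2)).add hRint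
      have hf2 : MemLp (fun ω => |1 - sq ω|) (ENNReal.ofReal 2) Q := by
        rw [show ENNReal.ofReal 2 = 2 by norm_num]
        exact (memLp_two_iff_integrable_sq
          (hsqmeas.const_sub 1).abs.aestronglyMeasurable).2 hfsq
      have hg2 : MemLp (fun ω => 1 + sq ω) (ENNReal.ofReal 2) Q := by
        rw [show ENNReal.ofReal 2 = 2 by norm_num]
        exact (memLp_two_iff_integrable_sq
          (hsqmeas.const_add 1).aestronglyMeasurable).2 hgsq
      have hH2 := integral_mul_le_Lp_mul_Lq_of_nonneg hpq
        (ae_of_all _ fun ω => abs_nonneg _) (ae_of_all _ fun ω => by positivity) hf2 hg2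
      have heq1 : ∀ ω, |1 - (R ω).toReal| = |1 - sq ω| * (1 + sq ω) := by
        intro ω
        have : 1 - (R ω).toReal = (1 - sq ω) * (1 + sq ω) := by nlinarith [hsq_sq ω]
        rw [this, abs_mul, abs_of_nonneg (by positivity : (0:ℝ) ≤ 1 + sq ω)]
      have hrw2 : ∀ y : ℝ, y ^ (2 : ℝ) = y ^ 2 := fun y => by
        rw [show (2:ℝ) = ((2:ℕ):ℝ) by norm_num, Real.rpow_natCast]
      simp_rw [hrw2] at hH2
      have hc2 : Integrable (fun ω : Fin n → α => 2 * sq ω) Q := by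
        exact hsqint.const_mul 2
      have hi1 : Integrable (fun ω : Fin n → α => 1 - 2 * sq ω) Q := by
        exact (integrable_const 1).sub hc2
      have hi2 : Integrable (fun ω : Fin n → α => 1 + 2 * sq ω) Q := by
        exact (integrable_const 1).add hc2
      have hfint : ∫ ω, |1 - sq ω| ^ 2 ∂Q = 2 - 2 * H := by
        have heq : (fun ω => |1 - sq ω| ^ 2) = fun ω => (1 - 2 * sq ω) + (R ω).toReal := by
          funext ω
          rw [sq_abs]
          nlinarith [hsq_sq ω]
        rw [heq, integral_add hi1 hRint, integral_sub (integrable_const 1) hc2,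
          integral_const_mul, hR1, ← hH_def, integral_const]
        simp [measure_univ]
        ring
      have hgint : ∫ ω, (1 + sq ω) ^ 2 ∂Q = 2 + 2 * H := by
        have heq : (fun ω => (1 + sq ω) ^ 2) = fun ω => (1 + 2 * sq ω) + (R ω).toReal := by
          funext ω
          nlinarith [hsq_sq ω]
        rw [heq, integral_add hi2 hRint, integral_add (integrable_const 1) hc2,
          integral_const_mul, hR1, ← hH_def, integral_const]
        simp [measure_univ]
        ring
      calc ∫ ω, |1 - (R ω).toReal| ∂Q = ∫ ω, |1 - sq ω| * (1 + sq ω) ∂Q := by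
            simp_rw [heq1]
        _ ≤ (∫ ω, |1 - sq ω| ^ 2 ∂Q) ^ (1/(2:ℝ)) * (∫ ω, (1 + sq ω) ^ 2 ∂Q) ^ (1/(2:ℝ)) := hH2
        _ = Real.sqrt (2 - 2 * H) * Real.sqrt (2 + 2 * H) := by
            rw [hfint, hgint, Real.sqrt_eq_rpow, Real.sqrt_eq_rpow]
    have hsqrt1 : Real.sqrt (2 - 2 * H) ≤ Real.sqrt K := Real.sqrt_le_sqrt hHK
    have hsqrt2 : Real.sqrt (2 + 2 * H) ≤ 2 := by
      calc Real.sqrt (2 + 2 * H) ≤ Real.sqrt 4 := Real.sqrt_le_sqrt (by linarith)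
        _ = 2 := by
            rw [show (4:ℝ) = 2 ^ 2 by norm_num, Real.sqrt_sq (by norm_num : (0:ℝ) ≤ 2)]
    have hKnn : 0 ≤ Real.sqrt K := Real.sqrt_nonneg _
    have h2nn : 0 ≤ Real.sqrt (2 - 2*H) := Real.sqrt_nonneg _
    calc ∫ ω, max (1 - (R ω).toReal) 0 ∂Q = (∫ ω, |1 - (R ω).toReal| ∂Q) / 2 := hhalf
      _ ≤ (Real.sqrt (2 - 2 * H) * Real.sqrt (2 + 2 * H)) / 2 := by linarith [hCS]
      _ ≤ (Real.sqrt K * 2) / 2 := by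
          have := mul_le_mul hsqrt1 hsqrt2 (Real.sqrt_nonneg _) hKnn
          linarith
      _ = Real.sqrt K := by ring
  -- negative part bound
  have hLneg_int : Integrable (fun ω => max (-(L ω)) 0) Qn := hLint.neg.pos_part
  have hLneg_le : ∫ ω, max (-(L ω)) 0 ∂Qn ≤ Real.sqrt K := by
    have htrans : ∫ ω, max (-(L ω)) 0 ∂Qn
        = ∫ ω, max (-(L ω)) 0 * (R ω).toReal ∂Q := by
      rw [hQn_eq, aux_integral_withDensity hRmeas hRfin']
    rw [htrans]
    refine le_trans (integral_mono_ae ?_ ?_ ?_) hTV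
    · have := hLneg_int
      rw [hQn_eq, integrable_withDensity_iff hRmeas hRfin'] at this
      exact this
    · exact hsub_int.pos_part
    · refine hmain.mono fun ω hw => ?_
      obtain ⟨h1, h2, -⟩ := hw
      show max (-(L ω)) 0 * (R ω).toReal ≤ max (1 - (R ω).toReal) 0
      by_cases h0 : ∀ i, r (ω i) ≠ 0
      · have hxpos : 0 < (R ω).toReal := by rw [h1 h0]; exact Real.exp_pos _
        have := aux_pospart_bound hxpos
        have hlog : Real.log ((R ω).toReal) = L ω := by rw [h1 h0, Real.log_exp]
        rw [hlog] at this
        exact this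
      · rw [h2 h0, mul_zero]
        exact le_max_right _ _
  -- positive part and Markov
  have hLpos_int : Integrable (fun ω => max (L ω) 0) Qn := hLint.pos_part
  have hLpos_le : ∫ ω, max (L ω) 0 ∂Qn ≤ (n : ℝ) * c + Real.sqrt K := by
    have hptw : ∀ ω, max (L ω) 0 = L ω + max (-(L ω)) 0 := by
      intro ω
      rcases le_total (L ω) 0 with h | h
      · rw [max_eq_right h, max_eq_left (by linarith)]; ring
      · rw [max_eq_left h, max_eq_right (by linarith)]; ring
    calc ∫ ω, max (L ω) 0 ∂Qn = ∫ ω, (L ω + max (-(L ω)) 0) ∂Qn := by simp_rw [hptw]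
      _ = (∫ ω, L ω ∂Qn) + ∫ ω, max (-(L ω)) 0 ∂Qn := integral_add hLint hLneg_int
      _ ≤ (n : ℝ) * c + Real.sqrt K := by rw [hLint_eq]; linarith [hLneg_le]
  have hMarkov : (Qn {ω | t ≤ L ω}).toReal ≤ ((n : ℝ) * c + Real.sqrt K) / t := by
    have h1 := mul_meas_ge_le_integral_of_nonneg (μ := Qn) (f := fun ω => max (L ω) 0)
      (ae_of_all _ fun ω => le_max_right _ _) hLpos_int t
    have hsub : Qn {ω | t ≤ L ω} ≤ Qn {ω | t ≤ max (L ω) 0} := by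
      refine measure_mono fun ω h => ?_
      simp only [Set.mem_setOf_eq] at h ⊢
      exact le_trans h (le_max_left _ _)
    have hfin : Qn {ω | t ≤ max (L ω) 0} ≠ ∞ := measure_ne_top _ _
    have h2 : (Qn {ω | t ≤ L ω}).toReal ≤ (Qn {ω | t ≤ max (L ω) 0}).toReal :=
      ENNReal.toReal_mono hfin hsub
    rw [le_div_iff₀ ht, mul_comm]
    exact le_trans (by exact mul_le_mul_of_nonneg_left h2 ht.le) (le_trans h1 hLpos_le)
  -- change of measure on the small-likelihood part
  have hLset : MeasurableSet {ω : Fin n → α | L ω < t} := measurableSet_lt hLmeas measurable_const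
  have hCOM : Qn (S ∩ {ω | L ω < t}) ≤ ENNReal.ofReal (Real.exp t) * Q S := by
    rw [hQn_eq, withDensity_apply _ (hS.inter hLset)]
    calc ∫⁻ ω in S ∩ {ω | L ω < t}, R ω ∂Q
        ≤ ∫⁻ ω in S ∩ {ω | L ω < t}, ENNReal.ofReal (Real.exp t) ∂Q := by
          refine setLIntegral_mono_ae' (hS.inter hLset) ?_
          refine hmain.mono fun ω ⟨h1, h2, hne⟩ hω => ?_
          by_cases h0 : ∀ i, r (ω i) ≠ 0
          · have : R ω = ENNReal.ofReal ((R ω).toReal) := (ENNReal.ofReal_toReal hne).symm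
            rw [this, h1 h0]
            exact ENNReal.ofReal_le_ofReal (Real.exp_le_exp.2 hω.2.le)
          · have : R ω = 0 := by
              rw [← ENNReal.ofReal_toReal hne, h2 h0]
              simp
            rw [this]
            exact zero_le
      _ = ENNReal.ofReal (Real.exp t) * Q (S ∩ {ω | L ω < t}) := setLIntegral_const _ _
      _ ≤ ENNReal.ofReal (Real.exp t) * Q S :=
          mul_le_mul_right (measure_mono Set.inter_subset_left) _
  -- split
  have hsplit : Qn S ≤ Qn {ω | t ≤ L ω} + Qn (S ∩ {ω | L ω < t}) := by
    refine le_trans (measure_mono ?_) (measure_union_le _ _)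
    intro ω hω
    by_cases h : t ≤ L ω
    · exact Or.inl h
    · exact Or.inr ⟨hω, not_le.1 h⟩
  have hc_nonneg : 0 ≤ c := by
    have hn' : (0:ℝ) < n := by exact_mod_cast hn
    nlinarith [hK_nonneg, hKeq]
  refine ⟨hc_nonneg, ?_⟩
  have hfin1 : Qn {ω | t ≤ L ω} ≠ ∞ := measure_ne_top _ _
  have hfin2 : Qn (S ∩ {ω | L ω < t}) ≠ ∞ := measure_ne_top _ _
  have h3 : (Qn S).toReal ≤ (Qn {ω | t ≤ L ω}).toReal + (Qn (S ∩ {ω | L ω < t})).toReal := by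
    have := ENNReal.toReal_mono (by finiteness) hsplit
    rwa [ENNReal.toReal_add hfin1 hfin2] at this
  have h4 : (Qn (S ∩ {ω | L ω < t})).toReal ≤ Real.exp t * (Q S).toReal := by
    have := ENNReal.toReal_mono (by finiteness) hCOM
    rwa [ENNReal.toReal_mul, ENNReal.toReal_ofReal (Real.exp_pos t).le] at this
  have hsqrtK : Real.sqrt K = Real.sqrt ((n : ℝ) * c) := by rw [hKeq]
  calc (Qn S).toReal ≤ (Qn {ω | t ≤ L ω}).toReal + (Qn (S ∩ {ω | L ω < t})).toReal := h3
    _ ≤ ((n : ℝ) * c + Real.sqrt K) / t + Real.exp t * (Q S).toReal := by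
        linarith [hMarkov, h4]
    _ = ((n : ℝ) * c + Real.sqrt ((n : ℝ) * c)) / t + Real.exp t * (Q S).toReal := by
        rw [hsqrtK]

end COMAux

set_option maxHeartbeats 2000000

/-- Lemma 6.11 : Fano-type minimax lower bound. -/
theorem statement_17
    (d n M : ℕ) (hd : 0 < d) (hn : 0 < n) (hM : 2 ≤ M)
    (𝓖 : Set (Measure ((Fin d → ℝ) × ℝ)))
    (h𝓖 : ∀ P ∈ 𝓖, IsProbabilityMeasure P ∧ P (cube d ×ˢ labels) = 1)
    (u v : ℝ) (hu : 0 < u) (hv : 0 < v)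
    (P : Fin (M + 1) → Measure ((Fin d → ℝ) × ℝ)) (hPG : ∀ j, P j ∈ 𝓖)
    (hKL : (M : ℝ≥0∞)⁻¹ * ∑ j ∈ Finset.univ.erase (0 : Fin (M + 1)), KL (P j) (P 0) ≤
      ENNReal.ofReal u)
    (hsep : ∀ i j : Fin (M + 1), i ≠ j →
      ∀ f : (Fin d → ℝ) → ℝ, Measurable f → v ≤ excess01 (P i) f + excess01 (P j) f) :
    (⨅ A : {A : Estimator d n // A.Meas},
        ⨆ Q : 𝓖, ∫ ω, excess01 Q.1 (A.1 ω) ∂iid Q.1 n) ≥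
      v / 4 * (1 - (2 * n * u + Real.sqrt (2 * n * u)) / Real.log M) := by
  classical
  have hPprob : ∀ i, IsProbabilityMeasure (P i) := fun i => (h𝓖 _ (hPG i)).1
  haveI hP0 : IsProbabilityMeasure (P 0) := hPprob 0
  haveI hQprob : ∀ i, IsProbabilityMeasure (iid (P i) n) := fun i => by
    haveI := hPprob i; exact isProbabilityMeasure_iid _ n
  set Lg : ℝ := Real.log M with hLg_def
  have hM1 : (1:ℝ) < M := by exact_mod_cast hM
  have hM0 : (0:ℝ) < M := by linarith
  have hLg : 0 < Lg := Real.log_pos hM1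
  -- Unpack the KL hypothesis
  have hMne : (M : ℝ≥0∞) ≠ 0 := by
    simp only [ne_eq, Nat.cast_eq_zero]
    omega
  have hMnetop : (M : ℝ≥0∞) ≠ ⊤ := ENNReal.natCast_ne_top M
  have hsum_ne : ∑ j ∈ Finset.univ.erase (0 : Fin (M + 1)), KL (P j) (P 0) ≠ ⊤ := by
    intro h
    rw [h, ENNReal.mul_top (by simp [hMnetop])] at hKL
    exact (by simp : ¬ (⊤ : ℝ≥0∞) ≤ ENNReal.ofReal u) hKL
  have hKLj_ne : ∀ j : Fin (M + 1), j ≠ 0 → KL (P j) (P 0) ≠ ⊤ := by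
    intro j hj
    intro h
    apply hsum_ne
    refine ENNReal.sum_eq_top.2 ⟨j, Finset.mem_erase.2 ⟨hj, Finset.mem_univ j⟩, h⟩
  have hcond : ∀ j : Fin (M + 1), j ≠ 0 → (P j ≪ P 0) ∧
      Integrable (fun x => Real.log (((P j).rnDeriv (P 0)) x).toReal) (P j) := by
    intro j hj
    by_contra h
    exact hKLj_ne j hj (by rw [KL, if_neg h])
  set c : Fin (M + 1) → ℝ :=
    fun j => ∫ x, Real.log (((P j).rnDeriv (P 0)) x).toReal ∂(P j) with hc_def
  have hKLval : ∀ j : Fin (M + 1), j ≠ 0 → KL (P j) (P 0) = ENNReal.ofReal (c j) := by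
    intro j hj
    rw [KL, if_pos (hcond j hj)]
  have hc_nonneg : ∀ j : Fin (M + 1), j ≠ 0 → 0 ≤ c j := by
    intro j hj
    haveI := hPprob j
    exact (iid_changeOfMeasure (P 0) (P j) (hcond j hj).1 (hcond j hj).2 n hn
      MeasurableSet.univ one_pos).1
  have hsum_c : ∑ j ∈ Finset.univ.erase (0 : Fin (M + 1)), c j ≤ (M : ℝ) * u := by
    have h1 : ∑ j ∈ Finset.univ.erase (0 : Fin (M + 1)), KL (P j) (P 0)
        ≤ (M : ℝ≥0∞) * ENNReal.ofReal u := by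
      calc ∑ j ∈ Finset.univ.erase (0 : Fin (M + 1)), KL (P j) (P 0)
          = (M : ℝ≥0∞) * ((M : ℝ≥0∞)⁻¹ *
            ∑ j ∈ Finset.univ.erase (0 : Fin (M + 1)), KL (P j) (P 0)) := by
            rw [← mul_assoc, ENNReal.mul_inv_cancel hMne hMnetop, one_mul]
        _ ≤ (M : ℝ≥0∞) * ENNReal.ofReal u := mul_le_mul_right hKL _
    rw [Finset.sum_congr rfl (fun j hj => hKLval j (Finset.ne_of_mem_erase hj)),
      ← ENNReal.ofReal_sum_of_nonneg (fun j hj => hc_nonneg j (Finset.ne_of_mem_erase hj)),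
      show (M : ℝ≥0∞) = ENNReal.ofReal (M : ℝ) by
        rw [ENNReal.ofReal_natCast],
      ← ENNReal.ofReal_mul (by positivity)] at h1
    exact (ENNReal.ofReal_le_ofReal_iff (by positivity)).1 h1
  -- Reduce to a single estimator
  rw [ge_iff_le]
  have : Nonempty {A : Estimator d n // A.Meas} :=
    ⟨⟨fun _ _ => 0, measurable_const⟩⟩
  refine le_ciInf fun A => ?_
  -- measurability of the risk functions
  set Ω := Fin n → (Fin d → ℝ) × ℝ with hΩ_def
  have hsgn : Measurable sgn := by
    unfold sgn
    exact Measurable.ite measurableSet_Ici measurable_const measurable_const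
  have hT : MeasurableSet {q : Ω × ((Fin d → ℝ) × ℝ) | sgn (A.1 q.1 q.2.1) ≠ q.2.2} := by
    have h1 : Measurable fun q : Ω × ((Fin d → ℝ) × ℝ) => sgn (A.1 q.1 q.2.1) :=
      hsgn.comp (A.2.comp (measurable_fst.prodMk (measurable_fst.comp measurable_snd)))
    have h2 : Measurable fun q : Ω × ((Fin d → ℝ) × ℝ) => q.2.2 :=
      measurable_snd.comp measurable_snd
    exact (measurableSet_eq_fun h1 h2).compl
  have hslice : ∀ ω : Ω, Measurable (A.1 ω) := fun ω => A.2.comp measurable_prodMk_left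
  have hrisk_meas : ∀ i, Measurable fun ω : Ω => risk01 (P i) (A.1 ω) := by
    intro i
    haveI := hPprob i
    exact (measurable_measure_prodMk_left (ν := P i) hT).ennreal_toReal
  set g : Fin (M + 1) → Ω → ℝ := fun i ω => excess01 (P i) (A.1 ω) with hg_def
  have hg_meas : ∀ i, Measurable (g i) := fun i => (hrisk_meas i).sub measurable_const
  have hbayes_nonneg : ∀ i, 0 ≤ bayes01 (P i) := fun i =>
    Real.iInf_nonneg fun f => ENNReal.toReal_nonneg
  have hbayes_le : ∀ i ω, bayes01 (P i) ≤ risk01 (P i) (A.1 ω) := by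
    intro i ω
    have hbb : BddBelow (Set.range fun f : {g : (Fin d → ℝ) → ℝ // Measurable g} =>
        risk01 (P i) f.1) := by
      refine ⟨0, ?_⟩
      rintro x ⟨f, rfl⟩
      exact ENNReal.toReal_nonneg
    exact ciInf_le hbb ⟨A.1 ω, hslice ω⟩
  have hrisk_le_one : ∀ (Pm : Measure ((Fin d → ℝ) × ℝ)) [IsProbabilityMeasure Pm]
      (f : (Fin d → ℝ) → ℝ), risk01 Pm f ≤ 1 := by
    intro Pm _ f
    show ((Pm {p | sgn (f p.1) ≠ p.2}).toReal) ≤ 1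
    have := ENNReal.toReal_mono (one_ne_top) (prob_le_one (μ := Pm)
      (s := {p | sgn (f p.1) ≠ p.2}))
    simpa using this
  have hg_nonneg : ∀ i ω, 0 ≤ g i ω := fun i ω => sub_nonneg.2 (hbayes_le i ω)
  have hg_le_one : ∀ i ω, g i ω ≤ 1 := by
    intro i ω
    haveI := hPprob i
    have h1 := hrisk_le_one (P i) (A.1 ω)
    have h2 := hbayes_nonneg i
    simp only [hg_def, excess01]
    linarith
  -- the selector sets
  set minSet : Fin (M + 1) → Set Ω := fun i => {ω | ∀ j, g i ω ≤ g j ω} with hminSet_def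
  have hminSet_meas : ∀ i, MeasurableSet (minSet i) := by
    intro i
    have : minSet i = ⋂ j, {ω | g i ω ≤ g j ω} := by
      ext ω; simp [hminSet_def, Set.mem_iInter]
    rw [this]
    exact MeasurableSet.iInter fun j => measurableSet_le (hg_meas i) (hg_meas j)
  set S : Fin (M + 1) → Set Ω :=
    fun i => minSet i ∩ ⋂ k, ⋂ (_ : k < i), (minSet k)ᶜ with hS_def
  have hS_meas : ∀ i, MeasurableSet (S i) := fun i =>
    (hminSet_meas i).inter
      (MeasurableSet.iInter fun k => MeasurableSet.iInter fun _ => (hminSet_meas k).compl)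
  have hS_sub : ∀ i, S i ⊆ minSet i := fun i => Set.inter_subset_left
  have hS_cover : ∀ ω, ∃ i, ω ∈ S i := by
    intro ω
    have hne : (Finset.univ.filter (fun i : Fin (M + 1) => ω ∈ minSet i)).Nonempty := by
      obtain ⟨i, -, hi⟩ := Finset.exists_min_image Finset.univ
        (fun i : Fin (M + 1) => g i ω) ⟨0, Finset.mem_univ 0⟩
      exact ⟨i, Finset.mem_filter.2 ⟨Finset.mem_univ i, fun j => hi j (Finset.mem_univ j)⟩⟩
    set i0 := (Finset.univ.filter (fun i : Fin (M + 1) => ω ∈ minSet i)).min' hne with hi0_def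
    have hi0mem : ω ∈ minSet i0 :=
      (Finset.mem_filter.1 ((Finset.univ.filter _).min'_mem hne)).2
    refine ⟨i0, hi0mem, ?_⟩
    refine Set.mem_iInter.2 fun k => Set.mem_iInter.2 fun hk => ?_
    intro hmem
    have : i0 ≤ k := Finset.min'_le _ k (Finset.mem_filter.2 ⟨Finset.mem_univ k, hmem⟩)
    exact absurd hk (not_lt.2 this)
  have hS_disj : ∀ i j : Fin (M + 1), i < j → ∀ ω, ω ∈ S i → ω ∉ S j := by
    intro i j hij ω hωi hωj
    have h1 : ω ∈ (minSet i)ᶜ := by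
      have := hωj.2
      have h2 := Set.mem_iInter.1 this i
      exact Set.mem_iInter.1 h2 hij
    exact h1 (hS_sub i hωi)
  have hS_disj' : ∀ i j : Fin (M + 1), i ≠ j → Disjoint (S i) (S j) := by
    intro i j hij
    rcases lt_or_gt_of_ne hij with h | h
    · exact Set.disjoint_left.2 fun ω hωi hωj => hS_disj i j h ω hωi hωj
    · exact Set.disjoint_left.2 fun ω hωi hωj => hS_disj j i h ω hωj hωi
  -- key pointwise excess bound
  have hkey : ∀ i ω, ω ∉ S i → v / 2 ≤ g i ω := by
    intro i ω hωi
    obtain ⟨m, hm⟩ := hS_cover ω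
    have hmi : m ≠ i := fun h => hωi (h ▸ hm)
    have hmin : g m ω ≤ g i ω := (hS_sub m hm) i
    have hs := hsep i m hmi.symm (A.1 ω) (hslice ω)
    have : v ≤ g i ω + g m ω := hs
    linarith
  -- per-index integral bound
  set a : Fin (M + 1) → ℝ := fun i => ((iid (P i) n) (S i)ᶜ).toReal with ha_def
  set q : Fin (M + 1) → ℝ := fun i => ((iid (P i) n) (S i)).toReal with hq_def
  have hqa : ∀ i, q i + a i = 1 := by
    intro i
    haveI := hQprob i
    have h := measure_add_measure_compl (μ := iid (P i) n) (hS_meas i)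
    rw [measure_univ] at h
    have h2 := congrArg ENNReal.toReal h
    rwa [ENNReal.toReal_add (measure_ne_top _ _) (measure_ne_top _ _), ENNReal.toReal_one] at h2
  have hg_int : ∀ i, Integrable (g i) (iid (P i) n) := by
    intro i
    haveI := hQprob i
    refine Integrable.mono' (integrable_const 1) (hg_meas i).aestronglyMeasurable
      (ae_of_all _ fun ω => ?_)
    rw [Real.norm_eq_abs, abs_of_nonneg (hg_nonneg i ω)]
    exact hg_le_one i ω
  have hint_bound : ∀ i, v / 2 * a i ≤ ∫ ω, g i ω ∂iid (P i) n := by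
    intro i
    haveI := hQprob i
    have hind : ∫ ω, (S i)ᶜ.indicator (fun _ => v / 2) ω ∂iid (P i) n = v / 2 * a i := by
      rw [integral_indicator_const _ (hS_meas i).compl, smul_eq_mul, mul_comm, measureReal_def]
    rw [← hind]
    refine integral_mono ((integrable_const (v / 2)).indicator (hS_meas i).compl)
      (hg_int i) (fun ω => ?_)
    by_cases hω : ω ∈ (S i)ᶜ
    · rw [Set.indicator_of_mem hω]
      exact hkey i ω hω
    · rw [Set.indicator_of_notMem hω]
      exact hg_nonneg i ω
  -- bound values of the supremum
  have hbdd : BddAbove (Set.range fun Q : 𝓖 => ∫ ω, excess01 Q.1 (A.1 ω) ∂iid Q.1 n) := by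
    refine ⟨1, ?_⟩
    rintro x ⟨Q, rfl⟩
    show (∫ ω, excess01 Q.1 (A.1 ω) ∂iid Q.1 n) ≤ 1
    haveI hQ1 : IsProbabilityMeasure Q.1 := (h𝓖 Q.1 Q.2).1
    haveI : IsProbabilityMeasure (iid Q.1 n) := isProbabilityMeasure_iid _ n
    by_cases hInt : Integrable (fun ω => excess01 Q.1 (A.1 ω)) (iid Q.1 n)
    · have hle : ∀ ω, excess01 Q.1 (A.1 ω) ≤ 1 := by
        intro ω
        have h1 := hrisk_le_one Q.1 (A.1 ω)
        have h2 : 0 ≤ bayes01 Q.1 := Real.iInf_nonneg fun f => ENNReal.toReal_nonneg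
        simp only [excess01]
        linarith
      calc ∫ ω, excess01 Q.1 (A.1 ω) ∂iid Q.1 n ≤ ∫ _ , (1:ℝ) ∂iid Q.1 n :=
            integral_mono hInt (integrable_const 1) hle
        _ = 1 := by simp
    · rw [integral_undef hInt]
      norm_num
  have hle_sup : ∀ i, ∫ ω, g i ω ∂iid (P i) n
      ≤ ⨆ Q : 𝓖, ∫ ω, excess01 Q.1 (A.1 ω) ∂iid Q.1 n := by
    intro i
    have := le_ciSup (f := fun Q : 𝓖 => ∫ ω, excess01 Q.1 (A.1 ω) ∂iid Q.1 n)
      hbdd (⟨P i, hPG i⟩ : 𝓖)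
    exact this
  -- the change-of-measure bound for each j ≠ 0
  have hchange : ∀ j : Fin (M + 1), j ≠ 0 →
      q j ≤ ((n : ℝ) * c j + Real.sqrt ((n : ℝ) * c j)) / Lg
        + (M : ℝ) * ((iid (P 0) n) (S j)).toReal := by
    intro j hj
    haveI := hPprob j
    have h := (iid_changeOfMeasure (P 0) (P j) (hcond j hj).1 (hcond j hj).2 n hn
      (hS_meas j) hLg).2
    rwa [hLg_def, Real.exp_log hM0] at h
  -- sum of P0-masses of the S j
  have hsum_S0 : ∑ j ∈ Finset.univ.erase (0 : Fin (M + 1)), ((iid (P 0) n) (S j)).toReal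
      ≤ a 0 := by
    haveI := hQprob 0
    have hUnion : ∑ j ∈ Finset.univ.erase (0 : Fin (M + 1)), (iid (P 0) n) (S j)
        = (iid (P 0) n) (⋃ j ∈ Finset.univ.erase (0 : Fin (M + 1)), S j) :=
      (measure_biUnion_finset
        (fun i hi j hj hij => hS_disj' i j hij) (fun j _ => hS_meas j)).symm
    have hsub : (⋃ j ∈ Finset.univ.erase (0 : Fin (M + 1)), S j) ⊆ (S 0)ᶜ := by
      intro ω hω
      simp only [Set.mem_iUnion] at hω
      obtain ⟨j, hj, hωj⟩ := hω
      intro hω0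
      exact (hS_disj' 0 j (Finset.ne_of_mem_erase hj).symm).le_bot ⟨hω0, hωj⟩
    rw [← ENNReal.toReal_sum (fun j _ => measure_ne_top _ _)] at *
    rw [hUnion]
    exact ENNReal.toReal_mono (measure_ne_top _ _) (measure_mono hsub)
  -- Cauchy–Schwarz for the square-root sum
  have hcard : (Finset.univ.erase (0 : Fin (M + 1))).card = M := by
    rw [Finset.card_erase_of_mem (Finset.mem_univ _), Finset.card_univ, Fintype.card_fin]
    omega
  have hnu_nonneg : (0:ℝ) ≤ (n : ℝ) * u := by positivity
  have hsqrt_sum : ∑ j ∈ Finset.univ.erase (0 : Fin (M + 1)), Real.sqrt ((n : ℝ) * c j)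
      ≤ (M : ℝ) * Real.sqrt ((n : ℝ) * u) := by
    have hCS := sq_sum_le_card_mul_sum_sq
      (s := Finset.univ.erase (0 : Fin (M + 1)))
      (f := fun j => Real.sqrt ((n : ℝ) * c j))
    have hsq : ∀ j ∈ Finset.univ.erase (0 : Fin (M + 1)),
        Real.sqrt ((n : ℝ) * c j) ^ 2 = (n : ℝ) * c j := fun j hj =>
      Real.sq_sqrt (mul_nonneg (Nat.cast_nonneg n) (hc_nonneg j (Finset.ne_of_mem_erase hj)))
    rw [Finset.sum_congr rfl hsq, hcard] at hCS
    have h2 : ∑ j ∈ Finset.univ.erase (0 : Fin (M + 1)), (n : ℝ) * c j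
        = (n : ℝ) * ∑ j ∈ Finset.univ.erase (0 : Fin (M + 1)), c j := by
      rw [Finset.mul_sum]
    have h3 : (∑ j ∈ Finset.univ.erase (0 : Fin (M + 1)), Real.sqrt ((n : ℝ) * c j)) ^ 2
        ≤ (M : ℝ) ^ 2 * ((n : ℝ) * u) := by
      refine le_trans hCS ?_
      rw [h2]
      have hn0 : (0:ℝ) ≤ (n : ℝ) := Nat.cast_nonneg n
      have : (n : ℝ) * ∑ j ∈ Finset.univ.erase (0 : Fin (M + 1)), c j
          ≤ (n : ℝ) * ((M : ℝ) * u) := mul_le_mul_of_nonneg_left hsum_c hn0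
      nlinarith [hM0]
    have h4 : 0 ≤ ∑ j ∈ Finset.univ.erase (0 : Fin (M + 1)), Real.sqrt ((n : ℝ) * c j) :=
      Finset.sum_nonneg fun j _ => Real.sqrt_nonneg _
    calc ∑ j ∈ Finset.univ.erase (0 : Fin (M + 1)), Real.sqrt ((n : ℝ) * c j)
        = Real.sqrt ((∑ j ∈ Finset.univ.erase (0 : Fin (M + 1)),
            Real.sqrt ((n : ℝ) * c j)) ^ 2) := (Real.sqrt_sq h4).symm
      _ ≤ Real.sqrt ((M : ℝ) ^ 2 * ((n : ℝ) * u)) := Real.sqrt_le_sqrt h3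
      _ = (M : ℝ) * Real.sqrt ((n : ℝ) * u) := by
          rw [Real.sqrt_mul (by positivity), Real.sqrt_sq hM0.le]
  -- pick the index with maximal error
  obtain ⟨i0, -, hmax⟩ := Finset.exists_max_image Finset.univ a ⟨0, Finset.mem_univ 0⟩
  have hamax : ∀ i, a i ≤ a i0 := fun i => hmax i (Finset.mem_univ i)
  have ha_nonneg : ∀ i, 0 ≤ a i := fun i => ENNReal.toReal_nonneg
  -- lower bound for the sum of correct-classification masses
  have hsum_q_low : (M : ℝ) * (1 - a i0) ≤ ∑ j ∈ Finset.univ.erase (0 : Fin (M + 1)), q j := by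
    have h1 : ∀ j ∈ Finset.univ.erase (0 : Fin (M + 1)), 1 - a i0 ≤ q j := by
      intro j hj
      have h2 := hqa j
      have h3 := hamax j
      linarith
    calc (M : ℝ) * (1 - a i0)
        = ∑ _j ∈ Finset.univ.erase (0 : Fin (M + 1)), (1 - a i0) := by
          rw [Finset.sum_const, hcard, nsmul_eq_mul]
      _ ≤ ∑ j ∈ Finset.univ.erase (0 : Fin (M + 1)), q j := Finset.sum_le_sum h1
  -- upper bound
  have hsum_q_up : ∑ j ∈ Finset.univ.erase (0 : Fin (M + 1)), q j
      ≤ ((M : ℝ) * ((n : ℝ) * u) + (M : ℝ) * Real.sqrt ((n : ℝ) * u)) / Lg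
        + (M : ℝ) * a i0 := by
    calc ∑ j ∈ Finset.univ.erase (0 : Fin (M + 1)), q j
        ≤ ∑ j ∈ Finset.univ.erase (0 : Fin (M + 1)),
            (((n : ℝ) * c j + Real.sqrt ((n : ℝ) * c j)) / Lg
              + (M : ℝ) * ((iid (P 0) n) (S j)).toReal) :=
          Finset.sum_le_sum fun j hj => hchange j (Finset.ne_of_mem_erase hj)
      _ = ((∑ j ∈ Finset.univ.erase (0 : Fin (M + 1)), (n : ℝ) * c j)
            + ∑ j ∈ Finset.univ.erase (0 : Fin (M + 1)), Real.sqrt ((n : ℝ) * c j)) / Lg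
          + (M : ℝ) * ∑ j ∈ Finset.univ.erase (0 : Fin (M + 1)),
              ((iid (P 0) n) (S j)).toReal := by
          rw [Finset.sum_add_distrib, ← Finset.sum_div, Finset.sum_add_distrib,
            ← Finset.mul_sum, ← Finset.mul_sum]
      _ ≤ ((M : ℝ) * ((n : ℝ) * u) + (M : ℝ) * Real.sqrt ((n : ℝ) * u)) / Lg
          + (M : ℝ) * a 0 := by
          have hn0 : (0:ℝ) ≤ (n : ℝ) := Nat.cast_nonneg n
          have hA : ∑ j ∈ Finset.univ.erase (0 : Fin (M + 1)), (n : ℝ) * c j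
              ≤ (M : ℝ) * ((n : ℝ) * u) := by
            rw [← Finset.mul_sum]
            have := mul_le_mul_of_nonneg_left hsum_c hn0
            nlinarith
          have hnum : (∑ j ∈ Finset.univ.erase (0 : Fin (M + 1)), (n : ℝ) * c j)
              + ∑ j ∈ Finset.univ.erase (0 : Fin (M + 1)), Real.sqrt ((n : ℝ) * c j)
              ≤ (M : ℝ) * ((n : ℝ) * u) + (M : ℝ) * Real.sqrt ((n : ℝ) * u) :=
            add_le_add hA hsqrt_sum
          have h5 := div_le_div_of_nonneg_right hnum hLg.le
          have h6 := mul_le_mul_of_nonneg_left hsum_S0 hM0.le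
          linarith
      _ ≤ ((M : ℝ) * ((n : ℝ) * u) + (M : ℝ) * Real.sqrt ((n : ℝ) * u)) / Lg
          + (M : ℝ) * a i0 := by
          have := hamax 0
          nlinarith [hM0]
  -- Fano conclusion
  have hfano : 1 - ((n : ℝ) * u + Real.sqrt ((n : ℝ) * u)) / Lg ≤ 2 * a i0 := by
    have h := le_trans hsum_q_low hsum_q_up
    have hh : ((M : ℝ) * ((n : ℝ) * u) + (M : ℝ) * Real.sqrt ((n : ℝ) * u)) / Lg
        = (M : ℝ) * (((n : ℝ) * u + Real.sqrt ((n : ℝ) * u)) / Lg) := by ring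
    rw [hh] at h
    have h' : (M : ℝ) * (1 - ((n : ℝ) * u + Real.sqrt ((n : ℝ) * u)) / Lg)
        ≤ (M : ℝ) * (2 * a i0) := by nlinarith [h]
    exact le_of_mul_le_mul_left h' hM0
  have hv4 : (0:ℝ) ≤ v / 4 := by linarith
  calc v / 4 * (1 - (2 * (n : ℝ) * u + Real.sqrt (2 * (n : ℝ) * u)) / Lg)
      ≤ v / 4 * (1 - ((n : ℝ) * u + Real.sqrt ((n : ℝ) * u)) / Lg) := by
        refine mul_le_mul_of_nonneg_left ?_ hv4
        have h1 : Real.sqrt ((n : ℝ) * u) ≤ Real.sqrt (2 * (n : ℝ) * u) :=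
          Real.sqrt_le_sqrt (by nlinarith)
        have h2 : ((n : ℝ) * u + Real.sqrt ((n : ℝ) * u))
            ≤ (2 * (n : ℝ) * u + Real.sqrt (2 * (n : ℝ) * u)) := by nlinarith
        have h3 : ((n : ℝ) * u + Real.sqrt ((n : ℝ) * u)) / Lg
            ≤ (2 * (n : ℝ) * u + Real.sqrt (2 * (n : ℝ) * u)) / Lg :=
          div_le_div_of_nonneg_right h2 hLg.le
        linarith
    _ ≤ v / 4 * (2 * a i0) := mul_le_mul_of_nonneg_left hfano hv4
    _ = v / 2 * a i0 := by ring
    _ ≤ ∫ ω, g i0 ω ∂iid (P i0) n := hint_bound i0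
    _ ≤ ⨆ Q : 𝓖, ∫ ω, excess01 Q.1 (A.1 ω) ∂iid Q.1 n := hle_sup i0

end ZZS
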